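/- Let s ∈ (0,1/2) and let f : ℝ → ℂ be measurable. Define F : ℝ → ℂ by F(t) := f(t) for t > 0 and F(t) := 0 for t ≤ 0. Then [F]²_{s,ℝ} = [f]²_{s,(0,∞)} + (1/s)·∫₀^∞ |f(t)|²·t^{−2s} dt, as an identity in [0,∞]. -/

import Mathlib

open MeasureTheory
open scoped ENNReal NNReal

/-- The squared Slobodeckij (Gagliardo) seminorm
`[g]²_{s,A} = ∫_A ∫_A |g(x) − g(y)|² / |x − y|^{1+2s} dx dy`, valued in `[0,∞]`. -/
noncomputable def slobSq (s : ℝ) (A : Set ℝ) (g : ℝ → ℂ) : ℝ≥0∞ :=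
  ∫⁻ x in A, ∫⁻ y in A,
    (‖g x - g y‖₊ : ℝ≥0∞) ^ 2 / ENNReal.ofReal (|x - y| ^ (1 + 2 * s))

private lemma key_int {s : ℝ} (hs0 : 0 < s) {x : ℝ} (hx : 0 < x) :
    ∫⁻ y in Set.Iic (0:ℝ), (ENNReal.ofReal (|x - y| ^ (1 + 2 * s)))⁻¹
      = ENNReal.ofReal (1/(2*s)) * ENNReal.ofReal (x ^ (-(2*s))) := by
  have h2s : (0:ℝ) < 2*s := by linarith
  have hr : -(1 + 2*s) < -1 := by linarith
  have step1 : ∫⁻ y in Set.Iic (0:ℝ), (ENNReal.ofReal (|x - y| ^ (1 + 2 * s)))⁻¹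
      = ∫⁻ y in Set.Iic (0:ℝ), ENNReal.ofReal ((x - y) ^ (-(1 + 2*s))) := by
    apply setLIntegral_congr_fun measurableSet_Iic
    refine (fun y hy => ?_)
    beta_reduce
    have hpos : 0 < x - y := by
      have : y ≤ 0 := hy
      linarith
    rw [abs_of_pos hpos, Real.rpow_neg hpos.le,
      ENNReal.ofReal_inv_of_pos (Real.rpow_pos_of_pos hpos _)]
  rw [step1]
  have hpre : (fun y : ℝ => x - y) ⁻¹' (Set.Ici x) = Set.Iic 0 := by
    ext y
    simp only [Set.mem_preimage, Set.mem_Ici, Set.mem_Iic]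
    constructor <;> intro h <;> linarith
  have step2 : ∫⁻ y in Set.Iic (0:ℝ), ENNReal.ofReal ((x - y) ^ (-(1 + 2*s)))
      = ∫⁻ u in Set.Ici x, ENNReal.ofReal (u ^ (-(1 + 2*s))) := by
    rw [← hpre]
    exact (Measure.measurePreserving_sub_left volume x).setLIntegral_comp_preimage_emb
      (MeasurableEquiv.subLeft x).measurableEmbedding
      (fun u => ENNReal.ofReal (u ^ (-(1 + 2*s)))) (Set.Ici x)
  rw [step2, ← Measure.restrict_congr_set Ioi_ae_eq_Ici]
  have hnn : 0 ≤ᵐ[volume.restrict (Set.Ioi x)] fun u : ℝ => u ^ (-(1 + 2*s)) := by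
    filter_upwards [self_mem_ae_restrict measurableSet_Ioi] with u hu
    exact Real.rpow_nonneg (le_of_lt (hx.trans hu)) _
  rw [← ofReal_integral_eq_lintegral_ofReal (integrableOn_Ioi_rpow_of_lt hr hx) hnn,
    integral_Ioi_rpow_of_lt hr hx, ← ENNReal.ofReal_mul (by positivity)]
  congr 1
  have h1 : -(1 + 2*s) + 1 = -(2*s) := by ring
  rw [h1]
  field_simp

theorem stmt_16 (s : ℝ) (hs : s ∈ Set.Ioo (0 : ℝ) (1/2)) (f : ℝ → ℂ) (hf : Measurable f) :
    slobSq s Set.univ (fun t => if 0 < t then f t else 0) =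
      slobSq s (Set.Ioi 0) f +
        ENNReal.ofReal (1/s) *
          ∫⁻ t in Set.Ioi (0 : ℝ), (‖f t‖₊ : ℝ≥0∞) ^ 2 * ENNReal.ofReal (t ^ (-(2 * s))) := by
  obtain ⟨hs0, -⟩ := hs
  set F : ℝ → ℂ := fun t => if 0 < t then f t else 0 with hF
  set T : ℝ≥0∞ :=
    ∫⁻ t in Set.Ioi (0 : ℝ), (‖f t‖₊ : ℝ≥0∞) ^ 2 * ENNReal.ofReal (t ^ (-(2 * s))) with hT
  set c : ℝ≥0∞ := ENNReal.ofReal (1/(2*s)) with hc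
  have hFm : Measurable F := by
    apply Measurable.ite _ hf measurable_const
    exact measurableSet_lt measurable_const measurable_id
  -- inner integral for x > 0
  have inner_pos : ∀ x : ℝ, 0 < x →
      (∫⁻ y, (‖F x - F y‖₊ : ℝ≥0∞) ^ 2 / ENNReal.ofReal (|x - y| ^ (1 + 2 * s)))
      = (∫⁻ y in Set.Ioi 0,
          (‖f x - f y‖₊ : ℝ≥0∞) ^ 2 / ENNReal.ofReal (|x - y| ^ (1 + 2 * s)))
        + (‖f x‖₊ : ℝ≥0∞) ^ 2 * (c * ENNReal.ofReal (x ^ (-(2 * s)))) := by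
    intro x hx
    rw [← lintegral_add_compl _ (measurableSet_Ioi (a := (0:ℝ))), Set.compl_Ioi]
    congr 1
    · apply setLIntegral_congr_fun measurableSet_Ioi
      refine (fun y hy => ?_)
      have hy' : 0 < y := hy
      simp only [hF, if_pos hx, if_pos hy']
    · have h1 : ∫⁻ y in Set.Iic (0:ℝ),
          (‖F x - F y‖₊ : ℝ≥0∞) ^ 2 / ENNReal.ofReal (|x - y| ^ (1 + 2 * s))
          = ∫⁻ y in Set.Iic (0:ℝ),
            (‖f x‖₊ : ℝ≥0∞) ^ 2 * (ENNReal.ofReal (|x - y| ^ (1 + 2 * s)))⁻¹ := by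
        apply setLIntegral_congr_fun measurableSet_Iic
        refine (fun y hy => ?_)
        beta_reduce
        have hy' : ¬ (0 < y) := not_lt.mpr hy
        rw [div_eq_mul_inv]
        congr 2
        simp only [hF, if_pos hx, if_neg hy', sub_zero]
      rw [h1, lintegral_const_mul' _ _ (ENNReal.pow_ne_top ENNReal.coe_ne_top), key_int hs0 hx]
  -- inner integral for x ≤ 0
  have inner_neg : ∀ x : ℝ, x ≤ 0 →
      (∫⁻ y, (‖F x - F y‖₊ : ℝ≥0∞) ^ 2 / ENNReal.ofReal (|x - y| ^ (1 + 2 * s)))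
      = ∫⁻ y in Set.Ioi 0,
          (‖f y‖₊ : ℝ≥0∞) ^ 2 / ENNReal.ofReal (|x - y| ^ (1 + 2 * s)) := by
    intro x hx
    rw [← lintegral_add_compl _ (measurableSet_Ioi (a := (0:ℝ))), Set.compl_Ioi]
    have hx' : ¬ (0 < x) := not_lt.mpr hx
    have h2 : ∫⁻ y in Set.Iic (0:ℝ),
        (‖F x - F y‖₊ : ℝ≥0∞) ^ 2 / ENNReal.ofReal (|x - y| ^ (1 + 2 * s)) = 0 := by
      have : ∫⁻ y in Set.Iic (0:ℝ),
          (‖F x - F y‖₊ : ℝ≥0∞) ^ 2 / ENNReal.ofReal (|x - y| ^ (1 + 2 * s))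
          = ∫⁻ _ in Set.Iic (0:ℝ), (0:ℝ≥0∞) := by
        apply setLIntegral_congr_fun measurableSet_Iic
        refine (fun y hy => ?_)
        have hy' : ¬ (0 < y) := not_lt.mpr hy
        simp [hF, if_neg hx', if_neg hy']
      rw [this, lintegral_zero]
    rw [h2, add_zero]
    apply setLIntegral_congr_fun measurableSet_Ioi
    refine (fun y hy => ?_)
    have hy' : 0 < y := hy
    simp only [hF, if_neg hx', if_pos hy', zero_sub, nnnorm_neg]
  -- the part where x > 0
  have E1 : (∫⁻ x in Set.Ioi (0:ℝ),
        ∫⁻ y, (‖F x - F y‖₊ : ℝ≥0∞) ^ 2 / ENNReal.ofReal (|x - y| ^ (1 + 2 * s)))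
      = slobSq s (Set.Ioi 0) f + c * T := by
    have h1 : (∫⁻ x in Set.Ioi (0:ℝ),
          ∫⁻ y, (‖F x - F y‖₊ : ℝ≥0∞) ^ 2 / ENNReal.ofReal (|x - y| ^ (1 + 2 * s)))
        = ∫⁻ x in Set.Ioi (0:ℝ),
            ((∫⁻ y in Set.Ioi 0,
              (‖f x - f y‖₊ : ℝ≥0∞) ^ 2 / ENNReal.ofReal (|x - y| ^ (1 + 2 * s)))
            + (‖f x‖₊ : ℝ≥0∞) ^ 2 * (c * ENNReal.ofReal (x ^ (-(2 * s))))) :=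
      setLIntegral_congr_fun measurableSet_Ioi
        (fun x hx => inner_pos x hx)
    have hBmeas : Measurable (fun x : ℝ =>
        (‖f x‖₊ : ℝ≥0∞) ^ 2 * (c * ENNReal.ofReal (x ^ (-(2 * s))))) := by fun_prop
    rw [h1, lintegral_add_right _ hBmeas]
    congr 1
    have h2 : ∀ x : ℝ,
        (‖f x‖₊ : ℝ≥0∞) ^ 2 * (c * ENNReal.ofReal (x ^ (-(2 * s))))
        = c * ((‖f x‖₊ : ℝ≥0∞) ^ 2 * ENNReal.ofReal (x ^ (-(2 * s)))) := fun x => by ring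
    rw [lintegral_congr h2, lintegral_const_mul' _ _ ENNReal.ofReal_ne_top]
  -- the part where x ≤ 0
  have E2 : (∫⁻ x in Set.Iic (0:ℝ),
        ∫⁻ y, (‖F x - F y‖₊ : ℝ≥0∞) ^ 2 / ENNReal.ofReal (|x - y| ^ (1 + 2 * s)))
      = c * T := by
    have h1 : (∫⁻ x in Set.Iic (0:ℝ),
          ∫⁻ y, (‖F x - F y‖₊ : ℝ≥0∞) ^ 2 / ENNReal.ofReal (|x - y| ^ (1 + 2 * s)))
        = ∫⁻ x in Set.Iic (0:ℝ), ∫⁻ y in Set.Ioi (0:ℝ),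
            (‖f y‖₊ : ℝ≥0∞) ^ 2 / ENNReal.ofReal (|x - y| ^ (1 + 2 * s)) :=
      setLIntegral_congr_fun measurableSet_Iic
        (fun x hx => inner_neg x hx)
    have hswap : (∫⁻ x in Set.Iic (0:ℝ), ∫⁻ y in Set.Ioi (0:ℝ),
          (‖f y‖₊ : ℝ≥0∞) ^ 2 / ENNReal.ofReal (|x - y| ^ (1 + 2 * s)))
        = ∫⁻ y in Set.Ioi (0:ℝ), ∫⁻ x in Set.Iic (0:ℝ),
          (‖f y‖₊ : ℝ≥0∞) ^ 2 / ENNReal.ofReal (|x - y| ^ (1 + 2 * s)) := by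
      apply lintegral_lintegral_swap
      apply Measurable.aemeasurable
      have : Measurable fun p : ℝ × ℝ =>
          (‖f p.2‖₊ : ℝ≥0∞) ^ 2 / ENNReal.ofReal (|p.1 - p.2| ^ (1 + 2 * s)) := by fun_prop
      exact this
    have h2 : (∫⁻ y in Set.Ioi (0:ℝ), ∫⁻ x in Set.Iic (0:ℝ),
          (‖f y‖₊ : ℝ≥0∞) ^ 2 / ENNReal.ofReal (|x - y| ^ (1 + 2 * s)))
        = ∫⁻ y in Set.Ioi (0:ℝ),
            (‖f y‖₊ : ℝ≥0∞) ^ 2 * (c * ENNReal.ofReal (y ^ (-(2 * s)))) := by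
      apply setLIntegral_congr_fun measurableSet_Ioi
      refine (fun y hy => ?_)
      beta_reduce
      have hy' : (0:ℝ) < y := hy
      have habs : ∫⁻ x in Set.Iic (0:ℝ),
          (‖f y‖₊ : ℝ≥0∞) ^ 2 / ENNReal.ofReal (|x - y| ^ (1 + 2 * s))
          = ∫⁻ x in Set.Iic (0:ℝ),
            (‖f y‖₊ : ℝ≥0∞) ^ 2 * (ENNReal.ofReal (|y - x| ^ (1 + 2 * s)))⁻¹ := by
        apply setLIntegral_congr_fun measurableSet_Iic
        refine (fun x hx => ?_)
        beta_reduce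
        rw [div_eq_mul_inv, abs_sub_comm]
      rw [habs, lintegral_const_mul' _ _ (ENNReal.pow_ne_top ENNReal.coe_ne_top), key_int hs0 hy']
    rw [h1, hswap, h2]
    have h3 : ∀ y : ℝ,
        (‖f y‖₊ : ℝ≥0∞) ^ 2 * (c * ENNReal.ofReal (y ^ (-(2 * s))))
        = c * ((‖f y‖₊ : ℝ≥0∞) ^ 2 * ENNReal.ofReal (y ^ (-(2 * s)))) := fun y => by ring
    rw [lintegral_congr h3, lintegral_const_mul' _ _ ENNReal.ofReal_ne_top]
  have expand : slobSq s Set.univ F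
      = (∫⁻ x in Set.Ioi (0:ℝ),
          ∫⁻ y, (‖F x - F y‖₊ : ℝ≥0∞) ^ 2 / ENNReal.ofReal (|x - y| ^ (1 + 2 * s)))
        + ∫⁻ x in Set.Iic (0:ℝ),
          ∫⁻ y, (‖F x - F y‖₊ : ℝ≥0∞) ^ 2 / ENNReal.ofReal (|x - y| ^ (1 + 2 * s)) := by
    unfold slobSq
    simp only [Measure.restrict_univ]
    rw [← lintegral_add_compl _ (measurableSet_Ioi (a := (0:ℝ))), Set.compl_Ioi]
  have hs' : s ≠ 0 := ne_of_gt hs0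
  have hcc : c + c = ENNReal.ofReal (1/s) := by
    rw [hc, ← ENNReal.ofReal_add (by positivity) (by positivity)]
    congr 1
    have h2 : 1/(2*s) + 1/(2*s) = 2*1/(2*s) := by ring
    rw [h2, mul_div_mul_left 1 s two_ne_zero]
  rw [expand, E1, E2, add_assoc, ← add_mul, hcc]
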